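/- Suppose an online algorithm for MaxAgree runs Greedy with probability 1 − p and an algorithm Dense with probability p, where Greedy guarantees profit ≥ (1/2)·OPT always, and Dense guarantees profit ≥ (1/2 + η)·OPT whenever OPT ≥ (1 − α/2)|E| (and possibly profit ≥ 0 otherwise). If OPT < (1−α/2)|E|, Greedy's guarantee profit ≥ |E|/2 yields ratio ≥ 1/(2−α). Then choosing p = α/(2 + 2η(2 − α)), the combined randomized algorithm has competitive ratio at least 1/2 + (αη/2)/(1 + 2η(1 − α/2)). -/

import Mathlib

/-- combining Greedy (run with probability `1 − p`) with Dense
(probability `p`), with `p = α/(2 + 2η(2 − α))`, yields expected profit at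
least `(1/2 + (αη/2)/(1 + 2η(1 − α/2)))·OPT`. -/
theorem combined_competitive_ratio
    (α η E OPT gProfit dProfit : ℝ)
    (hα0 : 0 < α) (hα1 : α < 1) (hη0 : 0 < η) (hη1 : η < 1 / 2)
    (hE : 0 ≤ E) (hOPT0 : 0 ≤ OPT) (hOPTE : OPT ≤ E)
    (hGreedyHalfE : E / 2 ≤ gProfit)
    (hGreedyHalfOPT : OPT / 2 ≤ gProfit)
    (hDense0 : 0 ≤ dProfit)
    (hDense : (1 - α / 2) * E ≤ OPT → (1 / 2 + η) * OPT ≤ dProfit) :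
    (1 / 2 + (α * η / 2) / (1 + 2 * η * (1 - α / 2))) * OPT ≤
      (1 - α / (2 + 2 * η * (2 - α))) * gProfit +
        (α / (2 + 2 * η * (2 - α))) * dProfit := by
  set K := 2 + 2 * η * (2 - α) with hKdef
  have hK : (0:ℝ) < K := by rw [hKdef]; nlinarith
  set p := α / K with hpdef
  set c := (α * η / 2) / (1 + 2 * η * (1 - α / 2)) with hcdef
  have hpK : p * K = α := div_mul_cancel₀ α hK.ne'
  have hcK : c * K = α * η := by
    rw [hcdef, hKdef]
    have hd1 : (0:ℝ) < 1 + 2 * η * (1 - α / 2) := by nlinarith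
    field_simp
    exact div_self (by nlinarith : (0:ℝ) < 1 + η * (2 - α)).ne'
  have hp0 : 0 ≤ p := le_of_lt (div_pos hα0 hK)
  have hp1 : p ≤ 1 := by
    rw [hpdef, div_le_one hK, hKdef]; nlinarith
  rcases le_or_gt ((1 - α / 2) * E) OPT with h | h
  · -- dense case: c = p * η and combine
    have hceq : c = p * η := by
      have h1 : c * K = (p * η) * K := by
        rw [hcK]; nlinarith [hpK]
      exact mul_right_cancel₀ hK.ne' h1
    have hd := hDense h
    nlinarith [mul_le_mul_of_nonneg_left hGreedyHalfOPT (by linarith : (0:ℝ) ≤ 1 - p),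
      mul_le_mul_of_nonneg_left hd hp0]
  · -- sparse case: use greedy bound via E
    have hgm : OPT ≤ (2 - α) * gProfit := by nlinarith
    have h1 : (1 / 2 + c) * K = 1 + 2 * η := by
      rw [mul_comm, mul_add, mul_comm _ c, hcK, hKdef]; ring
    have h2 : (1 - p) * K = (2 - α) * (1 + 2 * η) := by
      have : K - α = (2 - α) * (1 + 2 * η) := by rw [hKdef]; ring
      nlinarith [hpK]
    have hgoalK : (1 / 2 + c) * OPT * K ≤ ((1 - p) * gProfit + p * dProfit) * K := by
      have e1 : (1 / 2 + c) * OPT * K = (1 + 2 * η) * OPT := by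
        rw [mul_right_comm, h1]
      have e2 : (1 - p) * gProfit * K = (2 - α) * (1 + 2 * η) * gProfit := by
        rw [mul_right_comm, h2]
      have key : (1 + 2 * η) * OPT ≤ (2 - α) * (1 + 2 * η) * gProfit := by
        nlinarith [mul_le_mul_of_nonneg_left hgm (by linarith : (0:ℝ) ≤ 1 + 2 * η)]
      have hpd : 0 ≤ p * dProfit * K := by positivity
      rw [show ((1 - p) * gProfit + p * dProfit) * K
          = (1 - p) * gProfit * K + p * dProfit * K from by ring, e2, e1]
      linarith
    exact le_of_mul_le_mul_right hgoalK hK
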